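/- Cascade centrality of boundary seeds on the repeated path networks: consider N ≥ 3 agents and set p₀ = 3/4 for the duplex repeated path network 𝒢_R with all agents using Protocol OR, p₀ = 1/2 for the monoplex path network G_Pa, and p₀ = 1/4 for 𝒢_R with all agents using Protocol AND. Then for j ∈ {1, N}, the multiplex cascade centrality of agent j is C_j = ∑_{l=0}^{N−2} p₀^l + p₀^{N−2}, and for j ∈ {2, N−1}, C_j = 1 + ∑_{l=0}^{N−3} p₀^l + p₀^{N−3}. -/

import Mathlib

open MeasureTheory

inductive Protocol
  | OR
  | AND
deriving DecidableEq

noncomputable def ltmStep {n m : ℕ} (w : Fin m → Fin n → Fin n → ℝ)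
    (u : Fin n → Protocol) (μ : Fin n → Fin m → ℝ)
    (A : Finset (Fin n)) : Finset (Fin n) :=
  A ∪ Finset.univ.filter fun i =>
    (u i = Protocol.OR ∧ ∃ k, μ i k < ∑ j ∈ A, w k i j) ∨
    (u i = Protocol.AND ∧ ∀ k, μ i k < ∑ j ∈ A, w k i j)

noncomputable def ltmSS {n m : ℕ} (w : Fin m → Fin n → Fin n → ℝ)
    (u : Fin n → Protocol) (S₀ : Finset (Fin n))
    (μ : Fin n → Fin m → ℝ) : Finset (Fin n) :=
  (ltmStep w u μ)^[n] S₀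

noncomputable def thMeasure (n m : ℕ) : Measure (Fin n → Fin m → ℝ) :=
  Measure.pi fun _ => Measure.pi fun _ => volume.restrict (Set.Icc (0:ℝ) 1)

noncomputable def pLTM {n m : ℕ} (w : Fin m → Fin n → Fin n → ℝ)
    (u : Fin n → Protocol) (S₀ : Finset (Fin n)) (i : Fin n) : ℝ :=
  (thMeasure n m {μ | i ∈ ltmSS w u S₀ μ}).toReal

def lemStep {n m : ℕ} (S₀ : Finset (Fin n)) (u : Fin n → Protocol)
    (σ : Fin n → Fin m → Fin n) (A : Finset (Fin n)) : Finset (Fin n) :=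
  S₀ ∪ A ∪ Finset.univ.filter fun i =>
    (u i = Protocol.OR ∧ ∃ k, σ i k ∈ A) ∨
    (u i = Protocol.AND ∧ ∀ k, σ i k ∈ A)

def UReachable {n m : ℕ} (S₀ : Finset (Fin n)) (u : Fin n → Protocol)
    (σ : Fin n → Fin m → Fin n) (i : Fin n) : Prop :=
  i ∈ (lemStep S₀ u σ)^[n] S₀

instance {n m : ℕ} (S₀ : Finset (Fin n)) (u : Fin n → Protocol)
    (σ : Fin n → Fin m → Fin n) (i : Fin n) : Decidable (UReachable S₀ u σ i) := by
  unfold UReachable; infer_instance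

noncomputable def rProb {n m : ℕ} (w : Fin m → Fin n → Fin n → ℝ)
    (S₀ : Finset (Fin n)) (u : Fin n → Protocol) (i : Fin n) : ℝ :=
  ∑ σ : Fin n → Fin m → Fin n,
    if UReachable S₀ u σ i then ∏ a : Fin n, ∏ k : Fin m, w k a (σ a k) else 0

noncomputable def casCen {n m : ℕ} (w : Fin m → Fin n → Fin n → ℝ)
    (u : Fin n → Protocol) (j : Fin n) : ℝ :=
  ∑ i : Fin n, pLTM w u {j} i

noncomputable def pathW (N : ℕ) (i j : Fin N) : ℝ :=
  if j.val = i.val + 1 ∨ i.val = j.val + 1 then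
    (if i.val = 0 ∨ i.val = N - 1 then 1 else 1/2)
  else 0

noncomputable def cycleW (N : ℕ) (i j : Fin N) : ℝ :=
  if (i.val + 1) % N = j.val ∨ (j.val + 1) % N = i.val then 1/2 else 0

noncomputable def permW2 (N : ℕ) (i j : Fin N) : ℝ :=
  if ((i.val + 1) % N = j.val ∨ (j.val + 1) % N = i.val) ∧
      ¬((i.val = N - 2 ∧ j.val = N - 1) ∨ (i.val = N - 1 ∧ j.val = N - 2)) then
    (if i.val = N - 2 ∨ i.val = N - 1 then 1 else 1/2)
  else 0

noncomputable def wgt (N : ℕ) (i : Fin N) : ℝ :=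
  if i.val = 0 ∨ i.val = N - 1 then 1 else 1/2

lemma wgt_pos {N : ℕ} (i : Fin N) : 0 < wgt N i := by
  unfold wgt; split <;> norm_num

lemma sum_pathW {N : ℕ} (A : Finset (Fin N)) (i : Fin N) :
    ∑ x ∈ A, pathW N i x =
      wgt N i * (((if ∃ x ∈ A, x.val + 1 = i.val then 1 else 0) : ℝ)
        + (if ∃ x ∈ A, x.val = i.val + 1 then 1 else 0)) := by
  have hW : ∀ x, pathW N i x =
      if x.val + 1 = i.val ∨ x.val = i.val + 1 then wgt N i else 0 := by
    intro x
    unfold pathW wgt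
    exact if_congr (by omega) rfl rfl
  calc ∑ x ∈ A, pathW N i x
      = ∑ x ∈ A.filter (fun x => x.val + 1 = i.val ∨ x.val = i.val + 1), wgt N i := by
        rw [Finset.sum_filter]; exact Finset.sum_congr rfl (fun x _ => hW x)
    _ = wgt N i * ((A.filter (fun x => x.val + 1 = i.val ∨ x.val = i.val + 1)).card : ℝ) := by
        rw [Finset.sum_const, nsmul_eq_mul, mul_comm]
    _ = _ := by
        congr 1
        have hsplit : A.filter (fun x => x.val + 1 = i.val ∨ x.val = i.val + 1)
            = A.filter (fun x => x.val + 1 = i.val) ∪ A.filter (fun x => x.val = i.val + 1) := by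
          rw [← Finset.filter_or]
        have hdisj : Disjoint (A.filter (fun x : Fin N => x.val + 1 = i.val))
            (A.filter (fun x => x.val = i.val + 1)) := by
          rw [Finset.disjoint_filter]
          intro x _ h1 h2; omega
        rw [hsplit, Finset.card_union_of_disjoint hdisj]
        push_cast
        congr 1
        · by_cases h : ∃ x ∈ A, x.val + 1 = i.val
          · obtain ⟨x₀, hx₀, hv⟩ := h
            rw [if_pos ⟨x₀, hx₀, hv⟩]
            have : A.filter (fun x : Fin N => x.val + 1 = i.val) = {x₀} := by
              ext y
              simp only [Finset.mem_filter, Finset.mem_singleton]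
              constructor
              · rintro ⟨_, hy⟩; exact Fin.ext (by omega)
              · rintro rfl; exact ⟨hx₀, hv⟩
            simp [this]
          · rw [if_neg h]
            have : A.filter (fun x : Fin N => x.val + 1 = i.val) = ∅ := by
              rw [Finset.filter_eq_empty_iff]
              intro x hx hv; exact h ⟨x, hx, hv⟩
            simp [this]
        · by_cases h : ∃ x ∈ A, x.val = i.val + 1
          · obtain ⟨x₀, hx₀, hv⟩ := h
            rw [if_pos ⟨x₀, hx₀, hv⟩]
            have : A.filter (fun x : Fin N => x.val = i.val + 1) = {x₀} := by
              ext y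
              simp only [Finset.mem_filter, Finset.mem_singleton]
              constructor
              · rintro ⟨_, hy⟩; exact Fin.ext (by omega)
              · rintro rfl; exact ⟨hx₀, hv⟩
            simp [this]
          · rw [if_neg h]
            have : A.filter (fun x : Fin N => x.val = i.val + 1) = ∅ := by
              rw [Finset.filter_eq_empty_iff]
              intro x hx hv; exact h ⟨x, hx, hv⟩
            simp [this]

def agCond {N m : ℕ} (u : Fin N → Protocol) (μ : Fin N → Fin m → ℝ) (a : Fin N) : Prop :=
  (u a = Protocol.OR ∧ ∃ k, μ a k < wgt N a) ∨ (u a = Protocol.AND ∧ ∀ k, μ a k < wgt N a)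

def Phi {N m : ℕ} (u : Fin N → Protocol) (μ : Fin N → Fin m → ℝ) (j : Fin N) (t : ℕ)
    (i : Fin N) : Prop :=
  (j.val ≤ i.val ∧ i.val ≤ j.val + t ∧
    ∀ a : Fin N, j.val < a.val → a.val ≤ i.val → agCond u μ a) ∨
  (i.val ≤ j.val ∧ j.val ≤ i.val + t ∧
    ∀ a : Fin N, i.val ≤ a.val → a.val < j.val → agCond u μ a)

lemma Phi_mono {N m : ℕ} {u : Fin N → Protocol} {μ : Fin N → Fin m → ℝ} {j : Fin N} {t : ℕ}
    {i : Fin N} (h : Phi u μ j t i) : Phi u μ j (t + 1) i := by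
  rcases h with ⟨h1, h2, h3⟩ | ⟨h1, h2, h3⟩
  · exact Or.inl ⟨h1, by omega, h3⟩
  · exact Or.inr ⟨h1, by omega, h3⟩

lemma Phi_step_back {N m : ℕ} {u : Fin N → Protocol} {μ : Fin N → Fin m → ℝ} {j : Fin N} {t : ℕ}
    {i : Fin N} (h : Phi u μ j (t + 1) i) : Phi u μ j t i ∨ agCond u μ i := by
  rcases h with ⟨h1, h2, h3⟩ | ⟨h1, h2, h3⟩
  · by_cases hb : i.val ≤ j.val + t
    · exact Or.inl (Or.inl ⟨h1, hb, h3⟩)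
    · exact Or.inr (h3 i (by omega) le_rfl)
  · by_cases hb : j.val ≤ i.val + t
    · exact Or.inl (Or.inr ⟨h1, hb, h3⟩)
    · exact Or.inr (h3 i le_rfl (by omega))

lemma protoCond_mono {m : ℕ} {u : Protocol} {g : Fin m → ℝ} {s c : ℝ} (h : s ≤ c) :
    ((u = Protocol.OR ∧ ∃ k, g k < s) ∨ (u = Protocol.AND ∧ ∀ k, g k < s)) →
    ((u = Protocol.OR ∧ ∃ k, g k < c) ∨ (u = Protocol.AND ∧ ∀ k, g k < c)) := by
  rintro (⟨hu, k, hk⟩ | ⟨hu, hk⟩)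
  · exact Or.inl ⟨hu, k, lt_of_lt_of_le hk h⟩
  · exact Or.inr ⟨hu, fun k => lt_of_lt_of_le (hk k) h⟩

lemma mem_ltmStep_path {N m : ℕ} (u : Fin N → Protocol) (μ : Fin N → Fin m → ℝ)
    (A : Finset (Fin N)) (i : Fin N) :
    i ∈ ltmStep (fun _ : Fin m => pathW N) u μ A ↔ i ∈ A ∨
      ((u i = Protocol.OR ∧ ∃ k, μ i k < wgt N i *
          (((if ∃ x ∈ A, x.val + 1 = i.val then 1 else 0) : ℝ)
            + (if ∃ x ∈ A, x.val = i.val + 1 then 1 else 0))) ∨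
       (u i = Protocol.AND ∧ ∀ k, μ i k < wgt N i *
          (((if ∃ x ∈ A, x.val + 1 = i.val then 1 else 0) : ℝ)
            + (if ∃ x ∈ A, x.val = i.val + 1 then 1 else 0)))) := by
  unfold ltmStep
  simp only [Finset.mem_union, Finset.mem_filter, Finset.mem_univ, true_and, sum_pathW]

lemma mem_iter_path {N m : ℕ} (hm : m ≠ 0) (u : Fin N → Protocol) (μ : Fin N → Fin m → ℝ)
    (hμ : ∀ a k, 0 ≤ μ a k) (j : Fin N) (t : ℕ) (i : Fin N) :
    i ∈ (ltmStep (fun _ : Fin m => pathW N) u μ)^[t] {j} ↔ Phi u μ j t i := by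
  induction t generalizing i with
  | zero =>
    simp only [Function.iterate_zero, id_eq, Finset.mem_singleton]
    constructor
    · rintro rfl
      exact Or.inl ⟨le_rfl, by omega, fun a h1 h2 => absurd h1 (by omega)⟩
    · rintro (⟨h1, h2, _⟩ | ⟨h1, h2, _⟩) <;> exact Fin.ext (by omega)
  | succ t ih =>
    rw [Function.iterate_succ_apply']
    set A := (ltmStep (fun _ : Fin m => pathW N) u μ)^[t] {j} with hA
    rw [mem_ltmStep_path]
    by_cases hEL : ∃ x ∈ A, x.val + 1 = i.val <;> by_cases hER : ∃ x ∈ A, x.val = i.val + 1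
    · -- both neighbors active: i ∈ A already
      obtain ⟨x, hxA, hxv⟩ := hEL
      obtain ⟨y, hyA, hyv⟩ := hER
      have hx := (ih x).1 hxA
      have hy := (ih y).1 hyA
      have hiA : i ∈ A := by
        rw [ih]
        rcases hy with ⟨hy1, hy2, hy3⟩ | ⟨hy1, hy2, hy3⟩
        · by_cases hij : j.val ≤ i.val
          · exact Or.inl ⟨hij, by omega, fun a ha1 ha2 => hy3 a ha1 (by omega)⟩
          · -- i < j together with j ≤ y = i+1 forces y = j; use x
            rcases hx with ⟨hx1, hx2, hx3⟩ | ⟨hx1, hx2, hx3⟩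
            · exact absurd hx1 (by omega)
            · exact Or.inr ⟨by omega, by omega, fun a ha1 ha2 => hx3 a (by omega) ha2⟩
        · -- y ≤ j, so i < j; use x
          rcases hx with ⟨hx1, hx2, hx3⟩ | ⟨hx1, hx2, hx3⟩
          · exact absurd hx1 (by omega)
          · rw [Phi]
            exact Or.inr ⟨by omega, by omega, fun a ha1 ha2 => hx3 a (by omega) ha2⟩
      constructor
      · intro _; exact Phi_mono ((ih i).1 hiA)
      · intro _; exact Or.inl hiA
    · -- only left neighbor
      rw [if_pos hEL, if_neg hER]
      have hss : wgt N i * ((1 : ℝ) + 0) = wgt N i := by ring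
      rw [hss]
      obtain ⟨x, hxA, hxv⟩ := hEL
      have hx := (ih x).1 hxA
      constructor
      · rintro (hiA | hC)
        · exact Phi_mono ((ih i).1 hiA)
        · -- agCond i holds; extend the chain from x
          have hCi : agCond u μ i := hC
          rcases hx with ⟨hx1, hx2, hx3⟩ | ⟨hx1, hx2, hx3⟩
          · refine Or.inl ⟨by omega, by omega, fun a ha1 ha2 => ?_⟩
            by_cases hax : a.val ≤ x.val
            · exact hx3 a ha1 hax
            · have : a = i := Fin.ext (by omega)
              exact this ▸ hCi
          · by_cases hij : i.val ≤ j.val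
            · exact Or.inr ⟨hij, by omega, fun a ha1 ha2 => hx3 a (by omega) ha2⟩
            · refine Or.inl ⟨by omega, by omega, fun a ha1 ha2 => ?_⟩
              have : a = i := Fin.ext (by omega)
              exact this ▸ hCi
      · intro h
        rcases Phi_step_back h with hPhi | hC
        · exact Or.inl ((ih i).2 hPhi)
        · exact Or.inr hC
    · -- only right neighbor
      rw [if_neg hEL, if_pos hER]
      have hss : wgt N i * ((0 : ℝ) + 1) = wgt N i := by ring
      rw [hss]
      obtain ⟨y, hyA, hyv⟩ := hER
      have hy := (ih y).1 hyA
      constructor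
      · rintro (hiA | hC)
        · exact Phi_mono ((ih i).1 hiA)
        · have hCi : agCond u μ i := hC
          rcases hy with ⟨hy1, hy2, hy3⟩ | ⟨hy1, hy2, hy3⟩
          · by_cases hij : j.val ≤ i.val
            · exact Or.inl ⟨hij, by omega, fun a ha1 ha2 => hy3 a ha1 (by omega)⟩
            · refine Or.inr ⟨by omega, by omega, fun a ha1 ha2 => ?_⟩
              have : a = i := Fin.ext (by omega)
              exact this ▸ hCi
          · refine Or.inr ⟨by omega, by omega, fun a ha1 ha2 => ?_⟩
            by_cases hay : y.val ≤ a.val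
            · exact hy3 a hay ha2
            · have : a = i := Fin.ext (by omega)
              exact this ▸ hCi
      · intro h
        rcases Phi_step_back h with hPhi | hC
        · exact Or.inl ((ih i).2 hPhi)
        · exact Or.inr hC
    · -- no neighbor active
      rw [if_neg hEL, if_neg hER]
      have hss : wgt N i * ((0 : ℝ) + 0) = 0 := by ring
      rw [hss]
      have hcond : ¬ ((u i = Protocol.OR ∧ ∃ k, μ i k < 0) ∨
          (u i = Protocol.AND ∧ ∀ k, μ i k < 0)) := by
        rintro (⟨_, k, hk⟩ | ⟨_, hk⟩)
        · exact absurd hk (not_lt.2 (hμ i k))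
        · exact absurd (hk ⟨0, Nat.pos_of_ne_zero hm⟩)
            (not_lt.2 (hμ i ⟨0, Nat.pos_of_ne_zero hm⟩))
      constructor
      · rintro (hiA | hC)
        · exact Phi_mono ((ih i).1 hiA)
        · exact absurd hC hcond
      · intro h
        rcases h with ⟨h1, h2, h3⟩ | ⟨h1, h2, h3⟩
        · by_cases hb : i.val ≤ j.val + t
          · exact Or.inl ((ih i).2 (Or.inl ⟨h1, hb, h3⟩))
          · -- i = j + t + 1; left neighbor must be in A, contradiction
            exfalso
            have hi1 : 1 ≤ i.val := by omega
            set x : Fin N := ⟨i.val - 1, by omega⟩ with hxdef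
            have hxA : x ∈ A := by
              rw [ih]
              exact Or.inl ⟨by simp [hxdef]; omega, by simp [hxdef]; omega,
                fun a ha1 ha2 => h3 a ha1 (by simp [hxdef] at ha2; omega)⟩
            exact hEL ⟨x, hxA, by simp [hxdef]; omega⟩
        · by_cases hb : j.val ≤ i.val + t
          · exact Or.inl ((ih i).2 (Or.inr ⟨h1, hb, h3⟩))
          · exfalso
            have hi1 : i.val + 1 < N := by omega
            set x : Fin N := ⟨i.val + 1, hi1⟩ with hxdef
            have hxA : x ∈ A := by
              rw [ih]
              exact Or.inr ⟨by simp [hxdef]; omega, by simp [hxdef]; omega,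
                fun a ha1 ha2 => h3 a (by simp [hxdef] at ha1; omega) ha2⟩
            exact hER ⟨x, hxA, by simp [hxdef]⟩

noncomputable def nu (m : ℕ) : Measure (Fin m → ℝ) :=
  Measure.pi fun _ => volume.restrict (Set.Icc (0:ℝ) 1)

lemma restrict_Icc_univ : (volume.restrict (Set.Icc (0:ℝ) 1)) Set.univ = 1 := by
  rw [Measure.restrict_apply MeasurableSet.univ, Set.univ_inter, Real.volume_Icc]
  norm_num

lemma nu_univ (m : ℕ) : nu m Set.univ = 1 := by
  rw [nu, Measure.pi_univ]
  simp [restrict_Icc_univ]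

instance nu_prob (m : ℕ) : IsProbabilityMeasure (nu m) := ⟨nu_univ m⟩

lemma nu_forall_lt (m : ℕ) (c : ℝ) (h0 : 0 ≤ c) (h1 : c ≤ 1) :
    nu m {g | ∀ k, g k < c} = (ENNReal.ofReal c) ^ m := by
  have hset : {g : Fin m → ℝ | ∀ k, g k < c} = Set.pi Set.univ (fun _ => Set.Iio c) := by
    ext g; simp [Set.mem_pi]
  rw [hset, nu, Measure.pi_pi]
  have : (volume.restrict (Set.Icc (0:ℝ) 1)) (Set.Iio c) = ENNReal.ofReal c := by
    rw [Measure.restrict_apply measurableSet_Iio]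
    have : Set.Iio c ∩ Set.Icc (0:ℝ) 1 = Set.Ico 0 c := by
      ext x; simp [Set.mem_Ico, Set.mem_Icc]; constructor
      · rintro ⟨hx, hx0, _⟩; exact ⟨hx0, hx⟩
      · rintro ⟨hx0, hx⟩; exact ⟨hx, hx0, by linarith⟩
    rw [this, Real.volume_Ico, sub_zero]
  simp [this]

lemma nu_exists_lt (m : ℕ) (c : ℝ) (h0 : 0 ≤ c) (h1 : c ≤ 1) :
    nu m {g | ∃ k, g k < c} = 1 - (ENNReal.ofReal (1 - c)) ^ m := by
  have hmeas : MeasurableSet {g : Fin m → ℝ | ∃ k, g k < c} := by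
    have : {g : Fin m → ℝ | ∃ k, g k < c} = ⋃ k, (fun g => g k) ⁻¹' Set.Iio c := by
      ext g; simp
    rw [this]
    exact MeasurableSet.iUnion fun k => (measurable_pi_apply k) measurableSet_Iio
  have hcompl : nu m {g : Fin m → ℝ | ∃ k, g k < c}ᶜ = (ENNReal.ofReal (1 - c)) ^ m := by
    have hset : {g : Fin m → ℝ | ∃ k, g k < c}ᶜ = Set.pi Set.univ (fun _ => Set.Ici c) := by
      ext g
      simp only [Set.mem_compl_iff, Set.mem_setOf_eq, Set.mem_pi, Set.mem_univ,
        forall_true_left, Set.mem_Ici, not_exists, not_lt]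
    rw [hset, nu, Measure.pi_pi]
    have : (volume.restrict (Set.Icc (0:ℝ) 1)) (Set.Ici c) = ENNReal.ofReal (1 - c) := by
      rw [Measure.restrict_apply measurableSet_Ici]
      have : Set.Ici c ∩ Set.Icc (0:ℝ) 1 = Set.Icc c 1 := by
        ext x
        simp only [Set.mem_inter_iff, Set.mem_Ici, Set.mem_Icc]
        exact ⟨fun ⟨hx, _, hx1⟩ => ⟨hx, hx1⟩, fun ⟨hx, hx1⟩ => ⟨hx, by linarith, hx1⟩⟩
      rw [this, Real.volume_Icc]
    simp [this]
  have := measure_compl hmeas (measure_ne_top (nu m) _)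
  rw [hcompl] at this
  have hle : (ENNReal.ofReal (1 - c)) ^ m ≤ 1 := by
    apply pow_le_one'
    rw [← ENNReal.ofReal_one]
    exact ENNReal.ofReal_le_ofReal (by linarith)
  have h1' : (nu m Set.univ : ENNReal) = 1 := nu_univ m
  rw [measure_univ] at this
  -- this : 1 - nu m {g | ∃ k, g k < c} = (ENNReal.ofReal (1-c))^m
  have hfin : nu m {g : Fin m → ℝ | ∃ k, g k < c} ≤ 1 := prob_le_one
  rw [this, ENNReal.sub_sub_cancel ENNReal.one_ne_top hfin]

lemma thMeasure_forall_mem (n m : ℕ) (T : Finset (Fin n)) (E : Fin n → Set (Fin m → ℝ)) :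
    thMeasure n m {μ | ∀ a ∈ T, μ a ∈ E a} = ∏ a ∈ T, nu m (E a) := by
  have hset : {μ : Fin n → Fin m → ℝ | ∀ a ∈ T, μ a ∈ E a}
      = Set.pi Set.univ (fun a => if a ∈ T then E a else Set.univ) := by
    ext μ
    simp only [Set.mem_pi, Set.mem_univ, forall_true_left, Set.mem_setOf_eq]
    constructor
    · intro h a
      by_cases ha : a ∈ T
      · simpa [ha] using h a ha
      · simp [ha]
    · intro h a ha
      have := h a
      simpa [ha] using this
  rw [hset]
  show Measure.pi (fun _ => nu m) _ = _
  rw [Measure.pi_pi]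
  have : ∀ a : Fin n, nu m (if a ∈ T then E a else Set.univ)
      = if a ∈ T then nu m (E a) else 1 := by
    intro a; split <;> simp [nu_univ]
  simp only [this]
  rw [Finset.prod_ite_mem, Finset.univ_inter]

def thBox (n m : ℕ) : Set (Fin n → Fin m → ℝ) := {μ | ∀ a k, μ a k ∈ Set.Icc (0:ℝ) 1}

lemma thBox_meas (n m : ℕ) : MeasurableSet (thBox n m) := by
  have : thBox n m = Set.pi Set.univ (fun _ => Set.pi Set.univ (fun _ => Set.Icc (0:ℝ) 1)) := by
    ext μ
    simp only [thBox, Set.mem_setOf_eq, Set.mem_pi, Set.mem_univ, forall_true_left]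
  rw [this]
  exact MeasurableSet.univ_pi fun a => MeasurableSet.univ_pi fun k => measurableSet_Icc

lemma thMeasure_box (n m : ℕ) : thMeasure n m (thBox n m) = 1 := by
  have : thBox n m = Set.pi Set.univ (fun _ => Set.pi Set.univ (fun _ => Set.Icc (0:ℝ) 1)) := by
    ext μ
    simp only [thBox, Set.mem_setOf_eq, Set.mem_pi, Set.mem_univ, forall_true_left]
  rw [this, thMeasure, Measure.pi_pi]
  have hinner : (Measure.pi fun _ : Fin m => volume.restrict (Set.Icc (0:ℝ) 1))
      (Set.pi Set.univ (fun _ => Set.Icc (0:ℝ) 1)) = 1 := by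
    rw [Measure.pi_pi]
    have hv : (volume.restrict (Set.Icc (0:ℝ) 1)) (Set.Icc (0:ℝ) 1) = 1 := by
      rw [Measure.restrict_apply measurableSet_Icc, Set.inter_self, Real.volume_Icc]
      norm_num
    rw [Finset.prod_congr rfl (fun a _ => hv)]
    simp
  rw [Finset.prod_congr rfl (fun a _ => hinner)]
  simp

instance thMeasure_prob (n m : ℕ) : IsProbabilityMeasure (thMeasure n m) := by
  constructor
  rw [thMeasure, Measure.pi_univ]
  have h1 : (Measure.pi fun _ : Fin m => volume.restrict (Set.Icc (0:ℝ) 1))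
      Set.univ = 1 := nu_univ m
  simp [h1]

lemma thMeasure_boxc (n m : ℕ) : thMeasure n m (thBox n m)ᶜ = 0 := by
  rw [measure_compl (thBox_meas n m) (measure_ne_top _ _), thMeasure_box, measure_univ,
    tsub_self]

lemma thMeasure_congr_box {n m : ℕ} (X Y : Set (Fin n → Fin m → ℝ))
    (h : X ∩ thBox n m = Y ∩ thBox n m) : thMeasure n m X = thMeasure n m Y := by
  have key : ∀ Z : Set (Fin n → Fin m → ℝ), thMeasure n m Z = thMeasure n m (Z ∩ thBox n m) := by
    intro Z
    refine le_antisymm ?_ (measure_mono Set.inter_subset_left)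
    calc thMeasure n m Z ≤ thMeasure n m ((Z ∩ thBox n m) ∪ (Z ∩ (thBox n m)ᶜ)) := by
          apply measure_mono; rw [← Set.inter_union_distrib_left, Set.union_compl_self,
            Set.inter_univ]
      _ ≤ thMeasure n m (Z ∩ thBox n m) + thMeasure n m (Z ∩ (thBox n m)ᶜ) := measure_union_le _ _
      _ ≤ thMeasure n m (Z ∩ thBox n m) + 0 := by
          gcongr
          calc thMeasure n m (Z ∩ (thBox n m)ᶜ) ≤ thMeasure n m (thBox n m)ᶜ :=
            measure_mono Set.inter_subset_right
          _ = 0 := thMeasure_boxc n m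
      _ = thMeasure n m (Z ∩ thBox n m) := add_zero _
  rw [key X, key Y, h]



def chainSet {N : ℕ} (j i : Fin N) : Finset (Fin N) :=
  Finset.univ.filter fun a => (j.val < a.val ∧ a.val ≤ i.val) ∨ (i.val ≤ a.val ∧ a.val < j.val)

def Ea {N : ℕ} (m : ℕ) (u : Fin N → Protocol) (a : Fin N) : Set (Fin m → ℝ) :=
  {g | (u a = Protocol.OR ∧ ∃ k, g k < wgt N a) ∨ (u a = Protocol.AND ∧ ∀ k, g k < wgt N a)}

lemma Phi_iff_chain {N m : ℕ} (u : Fin N → Protocol) (μ : Fin N → Fin m → ℝ) (j i : Fin N) :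
    Phi u μ j N i ↔ ∀ a ∈ chainSet j i, μ a ∈ Ea m u a := by
  constructor
  · rintro (⟨h1, h2, h3⟩ | ⟨h1, h2, h3⟩) a ha <;>
      rw [chainSet, Finset.mem_filter] at ha <;>
      rcases ha.2 with ⟨ha1, ha2⟩ | ⟨ha1, ha2⟩
    · exact h3 a ha1 ha2
    · exact ((by omega : False)).elim
    · exact ((by omega : False)).elim
    · exact h3 a ha1 ha2
  · intro h
    by_cases hij : j.val ≤ i.val
    · exact Or.inl ⟨hij, by omega, fun a ha1 ha2 =>
        h a (Finset.mem_filter.2 ⟨Finset.mem_univ a, Or.inl ⟨ha1, ha2⟩⟩)⟩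
    · exact Or.inr ⟨by omega, by omega, fun a ha1 ha2 =>
        h a (Finset.mem_filter.2 ⟨Finset.mem_univ a, Or.inr ⟨ha1, ha2⟩⟩)⟩

lemma event_eq {N m : ℕ} (hm : m ≠ 0) (u : Fin N → Protocol) (j i : Fin N) :
    {μ : Fin N → Fin m → ℝ | i ∈ ltmSS (fun _ : Fin m => pathW N) u {j} μ} ∩ thBox N m
      = {μ | ∀ a ∈ chainSet j i, μ a ∈ Ea m u a} ∩ thBox N m := by
  ext μ
  simp only [Set.mem_inter_iff, Set.mem_setOf_eq, and_congr_left_iff]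
  intro hbox
  have hμ : ∀ a k, 0 ≤ μ a k := fun a k => (hbox a k).1
  rw [ltmSS, mem_iter_path hm u μ hμ j N i, Phi_iff_chain]

lemma card_filter_val {N : ℕ} (P : ℕ → Prop) [DecidablePred P] :
    (Finset.univ.filter fun a : Fin N => P a.val).card = ((Finset.range N).filter P).card := by
  apply Finset.card_bij (fun a _ => a.val)
  · intro a ha
    rw [Finset.mem_filter] at ha ⊢
    exact ⟨Finset.mem_range.2 a.isLt, ha.2⟩
  · intro a _ b _ hab; exact Fin.ext hab
  · intro b hb
    rw [Finset.mem_filter, Finset.mem_range] at hb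
    exact ⟨⟨b, hb.1⟩, Finset.mem_filter.2 ⟨Finset.mem_univ _, hb.2⟩, rfl⟩

lemma pLTM_path {N m : ℕ} (hm : m ≠ 0) (hN : 3 ≤ N) (u : Fin N → Protocol) (p0 : ℝ)
    (hq : ∀ a : Fin N, a.val ≠ 0 → a.val ≠ N - 1 → (nu m (Ea m u a)).toReal = p0)
    (hb : ∀ a : Fin N, a.val = 0 ∨ a.val = N - 1 → nu m (Ea m u a) = 1)
    (j i : Fin N) :
    pLTM (fun _ : Fin m => pathW N) u {j} i =
      if j.val ≤ i.val then p0 ^ (min i.val (N - 2) - j.val)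
      else p0 ^ (min (j.val - i.val) (j.val - 1)) := by
  rw [pLTM, thMeasure_congr_box _ _ (event_eq hm u j i), thMeasure_forall_mem,
    ENNReal.toReal_prod]
  rw [← Finset.prod_filter_mul_prod_filter_not (chainSet j i)
    (fun a => a.val ≠ 0 ∧ a.val ≠ N - 1)]
  have hb1 : ∀ a ∈ (chainSet j i).filter (fun a => ¬(a.val ≠ 0 ∧ a.val ≠ N - 1)),
      (nu m (Ea m u a)).toReal = 1 := by
    intro a ha
    rw [Finset.mem_filter] at ha
    rw [hb a (by push_neg at ha; omega), ENNReal.toReal_one]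
  rw [Finset.prod_congr rfl hb1, Finset.prod_const_one, mul_one]
  have hq1 : ∀ a ∈ (chainSet j i).filter (fun a => a.val ≠ 0 ∧ a.val ≠ N - 1),
      (nu m (Ea m u a)).toReal = p0 := by
    intro a ha
    rw [Finset.mem_filter] at ha
    exact hq a ha.2.1 ha.2.2
  rw [Finset.prod_congr rfl hq1, Finset.prod_const]
  congr 1
  rw [chainSet, Finset.filter_filter, card_filter_val
    (fun v => ((j.val < v ∧ v ≤ i.val) ∨ (i.val ≤ v ∧ v < j.val)) ∧ v ≠ 0 ∧ v ≠ N - 1)]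
  by_cases hij : j.val ≤ i.val
  · rw [if_pos hij]
    have : (Finset.range N).filter
        (fun v => ((j.val < v ∧ v ≤ i.val) ∨ (i.val ≤ v ∧ v < j.val)) ∧ v ≠ 0 ∧ v ≠ N - 1)
        = Finset.Ioc j.val (min i.val (N - 2)) := by
      ext v
      simp only [Finset.mem_filter, Finset.mem_range, Finset.mem_Ioc]
      have hiN := i.isLt
      have hjN := j.isLt
      omega
    rw [this, Nat.card_Ioc]
  · rw [if_neg hij]
    have : (Finset.range N).filter
        (fun v => ((j.val < v ∧ v ≤ i.val) ∨ (i.val ≤ v ∧ v < j.val)) ∧ v ≠ 0 ∧ v ≠ N - 1)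
        = Finset.Ico (max i.val 1) j.val := by
      ext v
      simp only [Finset.mem_filter, Finset.mem_range, Finset.mem_Ico]
      have hiN := i.isLt
      have hjN := j.isLt
      omega
    rw [this, Nat.card_Ico]
    congr 1
    omega



lemma wgt_boundary {N : ℕ} (a : Fin N) (h : a.val = 0 ∨ a.val = N - 1) : wgt N a = 1 := by
  rw [wgt, if_pos h]

lemma wgt_interior {N : ℕ} (a : Fin N) (h0 : a.val ≠ 0) (h1 : a.val ≠ N - 1) :
    wgt N a = 1/2 := by
  rw [wgt, if_neg (by tauto)]

lemma Ea_or {N m : ℕ} {u : Fin N → Protocol} {a : Fin N} (h : u a = Protocol.OR) :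
    Ea m u a = {g | ∃ k, g k < wgt N a} := by
  ext g; simp [Ea, h]

lemma Ea_and {N m : ℕ} {u : Fin N → Protocol} {a : Fin N} (h : u a = Protocol.AND) :
    Ea m u a = {g | ∀ k, g k < wgt N a} := by
  ext g; simp [Ea, h]

lemma hb_generic {N m : ℕ} (hm : m ≠ 0) (u : Fin N → Protocol) :
    ∀ a : Fin N, a.val = 0 ∨ a.val = N - 1 → nu m (Ea m u a) = 1 := by
  intro a ha
  rcases h : u a with _ | _
  · rw [Ea_or h, wgt_boundary a ha, nu_exists_lt m 1 zero_le_one le_rfl]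
    simp [zero_pow hm]
  · rw [Ea_and h, wgt_boundary a ha, nu_forall_lt m 1 zero_le_one le_rfl]
    simp

lemma nu_interior_or {N m : ℕ} {u : Fin N → Protocol} {a : Fin N} (h : u a = Protocol.OR)
    (h0 : a.val ≠ 0) (h1 : a.val ≠ N - 1) :
    (nu m (Ea m u a)).toReal = 1 - (1/2 : ℝ) ^ m := by
  rw [Ea_or h, wgt_interior a h0 h1, nu_exists_lt m (1/2) (by norm_num) (by norm_num)]
  have : (1 : ℝ) - 1/2 = 1/2 := by norm_num
  rw [this, ← ENNReal.ofReal_pow (by norm_num), ← ENNReal.ofReal_one,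
    ← ENNReal.ofReal_sub _ (by positivity), ENNReal.toReal_ofReal]
  have : (1/2 : ℝ) ^ m ≤ 1 := pow_le_one₀ (by norm_num) (by norm_num)
  linarith

lemma nu_interior_and {N m : ℕ} {u : Fin N → Protocol} {a : Fin N} (h : u a = Protocol.AND)
    (h0 : a.val ≠ 0) (h1 : a.val ≠ N - 1) :
    (nu m (Ea m u a)).toReal = (1/2 : ℝ) ^ m := by
  rw [Ea_and h, wgt_interior a h0 h1, nu_forall_lt m (1/2) (by norm_num) (by norm_num),
    ← ENNReal.ofReal_pow (by norm_num), ENNReal.toReal_ofReal (by positivity)]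

lemma hq_or2 {N : ℕ} : ∀ a : Fin N, a.val ≠ 0 → a.val ≠ N - 1 →
    (nu 2 (Ea 2 (fun _ => Protocol.OR) a)).toReal = 3/4 := by
  intro a h0 h1
  rw [nu_interior_or rfl h0 h1]
  norm_num

lemma hq_and2 {N : ℕ} : ∀ a : Fin N, a.val ≠ 0 → a.val ≠ N - 1 →
    (nu 2 (Ea 2 (fun _ => Protocol.AND) a)).toReal = 1/4 := by
  intro a h0 h1
  rw [nu_interior_and rfl h0 h1]
  norm_num

lemma hq_mono {N : ℕ} (u : Fin N → Protocol) : ∀ a : Fin N, a.val ≠ 0 → a.val ≠ N - 1 →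
    (nu 1 (Ea 1 u a)).toReal = 1/2 := by
  intro a h0 h1
  rcases h : u a with _ | _
  · rw [nu_interior_or h h0 h1]; norm_num
  · rw [nu_interior_and h h0 h1]; norm_num

lemma sum0 (p0 : ℝ) (N : ℕ) (hN : 1 ≤ N) :
    ∑ v ∈ Finset.range N, p0 ^ min v (N - 2) =
      ∑ l ∈ Finset.range (N - 1), p0 ^ l + p0 ^ (N - 2) := by
  obtain ⟨M, rfl⟩ : ∃ M, N = M + 1 := ⟨N - 1, by omega⟩
  rw [Finset.sum_range_succ]
  have h1 : ∑ v ∈ Finset.range M, p0 ^ min v (M + 1 - 2) = ∑ v ∈ Finset.range M, p0 ^ v := by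
    refine Finset.sum_congr rfl fun v hv => ?_
    rw [Finset.mem_range] at hv
    congr 1
    omega
  have h2 : min M (M + 1 - 2) = M + 1 - 2 := by omega
  have h5 : M + 1 - 1 = M := by omega
  rw [h1, h2, h5]

lemma sumN1 (p0 : ℝ) (N : ℕ) (hN : 3 ≤ N) :
    ∑ v ∈ Finset.range N,
        (if N - 1 ≤ v then p0 ^ (min v (N - 2) - (N - 1)) else p0 ^ min (N - 1 - v) (N - 2)) =
      ∑ l ∈ Finset.range (N - 1), p0 ^ l + p0 ^ (N - 2) := by
  have key : ∑ v ∈ Finset.range N,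
      (if N - 1 ≤ v then p0 ^ (min v (N - 2) - (N - 1)) else p0 ^ min (N - 1 - v) (N - 2)) =
      ∑ v ∈ Finset.range N, p0 ^ min (N - 1 - v) (N - 2) := by
    refine Finset.sum_congr rfl fun v hv => ?_
    rw [Finset.mem_range] at hv
    split_ifs with h
    · congr 1; omega
    · rfl
  rw [key]
  have hrefl := Finset.sum_range_reflect (fun v => p0 ^ min v (N - 2)) N
  rw [hrefl, sum0 p0 N (by omega)]

lemma sum1 (p0 : ℝ) (N : ℕ) (hN : 3 ≤ N) :
    ∑ v ∈ Finset.range N,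
        (if 1 ≤ v then p0 ^ (min v (N - 2) - 1) else p0 ^ min (1 - v) 0) =
      1 + ∑ l ∈ Finset.range (N - 2), p0 ^ l + p0 ^ (N - 3) := by
  obtain ⟨M, rfl⟩ : ∃ M, N = M + 1 := ⟨N - 1, by omega⟩
  rw [Finset.sum_range_succ']
  have h1 : ∀ v ∈ Finset.range M,
      (if 1 ≤ v + 1 then p0 ^ (min (v + 1) (M + 1 - 2) - 1) else p0 ^ min (1 - (v + 1)) 0)
        = p0 ^ min v (M - 2) := by
    intro v hv
    rw [Finset.mem_range] at hv
    rw [if_pos (by omega)]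
    congr 1
    omega
  rw [Finset.sum_congr rfl h1, sum0 p0 M (by omega), if_neg (by omega)]
  have h2 : min (1 - 0) 0 = 0 := by omega
  rw [h2, pow_zero]
  have h3 : M - 1 = M + 1 - 2 := by omega
  have h4 : M - 2 = M + 1 - 3 := by omega
  rw [h3, h4]
  ring

lemma sumN2 (p0 : ℝ) (N : ℕ) (hN : 3 ≤ N) :
    ∑ v ∈ Finset.range N,
        (if N - 2 ≤ v then p0 ^ (min v (N - 2) - (N - 2)) else p0 ^ min (N - 2 - v) (N - 2 - 1)) =
      1 + ∑ l ∈ Finset.range (N - 2), p0 ^ l + p0 ^ (N - 3) := by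
  have key : ∀ v ∈ Finset.range N,
      (if N - 2 ≤ v then p0 ^ (min v (N - 2) - (N - 2)) else p0 ^ min (N - 2 - v) (N - 2 - 1)) =
      (fun w => if 1 ≤ w then p0 ^ (min w (N - 2) - 1) else p0 ^ min (1 - w) 0) (N - 1 - v) := by
    intro v hv
    rw [Finset.mem_range] at hv
    simp only
    split_ifs with h1 h2 h3 <;> (congr 1 <;> omega)
  rw [Finset.sum_congr rfl key]
  have hrefl := Finset.sum_range_reflect
    (fun w => if 1 ≤ w then p0 ^ (min w (N - 2) - 1) else p0 ^ min (1 - w) 0) N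
  rw [hrefl, sum1 p0 N hN]

lemma casCen_formula {N m : ℕ} (hm : m ≠ 0) (hN : 3 ≤ N) (u : Fin N → Protocol) (p0 : ℝ)
    (hq : ∀ a : Fin N, a.val ≠ 0 → a.val ≠ N - 1 → (nu m (Ea m u a)).toReal = p0)
    (j : Fin N) :
    casCen (fun _ : Fin m => pathW N) u j = ∑ v ∈ Finset.range N,
      (if j.val ≤ v then p0 ^ (min v (N - 2) - j.val) else p0 ^ min (j.val - v) (j.val - 1)) := by
  rw [casCen,
    Finset.sum_congr rfl (fun i _ => pLTM_path hm hN u p0 hq (hb_generic hm u) j i)]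
  exact Fin.sum_univ_eq_sum_range
    (fun v => if j.val ≤ v then p0 ^ (min v (N - 2) - j.val)
      else p0 ^ min (j.val - v) (j.val - 1)) N

lemma sum_seed_bd (p0 : ℝ) (N : ℕ) (hN : 3 ≤ N) (J : ℕ) (hJ : J = 0 ∨ J = N - 1) :
    ∑ v ∈ Finset.range N,
        (if J ≤ v then p0 ^ (min v (N - 2) - J) else p0 ^ min (J - v) (J - 1)) =
      ∑ l ∈ Finset.range (N - 1), p0 ^ l + p0 ^ (N - 2) := by
  rcases hJ with rfl | rfl
  · rw [← sum0 p0 N (by omega)]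
    refine Finset.sum_congr rfl fun v hv => ?_
    rw [if_pos (Nat.zero_le v)]
    congr 1 <;> omega
  · rw [← sumN1 p0 N hN]
    refine Finset.sum_congr rfl fun v hv => ?_
    rw [Finset.mem_range] at hv
    split_ifs with h
    · rfl
    · congr 1 <;> omega

lemma sum_seed_in (p0 : ℝ) (N : ℕ) (hN : 3 ≤ N) (J : ℕ) (hJ : J = 1 ∨ J = N - 2) :
    ∑ v ∈ Finset.range N,
        (if J ≤ v then p0 ^ (min v (N - 2) - J) else p0 ^ min (J - v) (J - 1)) =
      1 + ∑ l ∈ Finset.range (N - 2), p0 ^ l + p0 ^ (N - 3) := by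
  rcases hJ with rfl | rfl
  · rw [← sum1 p0 N hN]
  · rw [← sumN2 p0 N hN]


/-- cascade centrality of boundary seeds on the (repeated) path
networks, with `p₀ = 3/4` (duplex, all OR), `p₀ = 1/2` (monoplex path, either
protocol) and `p₀ = 1/4` (duplex, all AND): for 1-based `j ∈ {1, N}` (0-based
`j.val ∈ {0, N−1}`), `C_j = ∑_{l=0}^{N−2} p₀^l + p₀^{N−2}`; for 1-based
`j ∈ {2, N−1}` (0-based `j.val ∈ {1, N−2}`),
`C_j = 1 + ∑_{l=0}^{N−3} p₀^l + p₀^{N−3}`. -/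
theorem path_cascade_centrality (N : ℕ) (hN : 3 ≤ N) (j : Fin N) :
    ((j.val = 0 ∨ j.val = N - 1) →
      (casCen (fun _ : Fin 2 => pathW N) (fun _ => Protocol.OR) j =
        (∑ l ∈ Finset.range (N - 1), (3/4 : ℝ) ^ l) + (3/4 : ℝ) ^ (N - 2)) ∧
      (∀ u : Fin N → Protocol,
        casCen (fun _ : Fin 1 => pathW N) u j =
          (∑ l ∈ Finset.range (N - 1), (1/2 : ℝ) ^ l) + (1/2 : ℝ) ^ (N - 2)) ∧
      (casCen (fun _ : Fin 2 => pathW N) (fun _ => Protocol.AND) j =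
        (∑ l ∈ Finset.range (N - 1), (1/4 : ℝ) ^ l) + (1/4 : ℝ) ^ (N - 2))) ∧
    ((j.val = 1 ∨ j.val = N - 2) →
      (casCen (fun _ : Fin 2 => pathW N) (fun _ => Protocol.OR) j =
        1 + (∑ l ∈ Finset.range (N - 2), (3/4 : ℝ) ^ l) + (3/4 : ℝ) ^ (N - 3)) ∧
      (∀ u : Fin N → Protocol,
        casCen (fun _ : Fin 1 => pathW N) u j =
          1 + (∑ l ∈ Finset.range (N - 2), (1/2 : ℝ) ^ l) + (1/2 : ℝ) ^ (N - 3)) ∧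
      (casCen (fun _ : Fin 2 => pathW N) (fun _ => Protocol.AND) j =
        1 + (∑ l ∈ Finset.range (N - 2), (1/4 : ℝ) ^ l) + (1/4 : ℝ) ^ (N - 3))) := by
  constructor
  · intro hj
    refine ⟨?_, fun u => ?_, ?_⟩
    · rw [casCen_formula two_ne_zero hN _ (3/4) hq_or2 j, sum_seed_bd _ N hN _ hj]
    · rw [casCen_formula one_ne_zero hN u (1/2) (hq_mono u) j, sum_seed_bd _ N hN _ hj]
    · rw [casCen_formula two_ne_zero hN _ (1/4) hq_and2 j, sum_seed_bd _ N hN _ hj]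
  · intro hj
    refine ⟨?_, fun u => ?_, ?_⟩
    · rw [casCen_formula two_ne_zero hN _ (3/4) hq_or2 j, sum_seed_in _ N hN _ hj]
    · rw [casCen_formula one_ne_zero hN u (1/2) (hq_mono u) j, sum_seed_in _ N hN _ hj]
    · rw [casCen_formula two_ne_zero hN _ (1/4) hq_and2 j, sum_seed_in _ N hN _ hj]
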